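/- Let N ≥ 3 and let G be the directed N-cycle. For any finite field F_q, the optimal trade-off between broadcast rate and locality among vector linear index codes for G over F_q is β*_{G,q}(r) = max{ N(N−1−r)/(N−2), N−1 } for all r ≥ 1. -/

import Mathlib

/-- A valid vector linear index code: `L` is a valid encoder matrix for query sets `R`
if every receiver `i` can decode each demanded component `(i, m)`. -/
def ValidVectorLinearCode {N M ℓ : ℕ} (q : Type) [Field q]
    (K : Fin N → Finset (Fin N))
    (L : Matrix (Fin N × Fin M) (Fin ℓ) q)
    (R : Fin N → Finset (Fin ℓ)) : Prop :=
  ∀ i : Fin N, ∀ m : Fin M,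
    ∃ u : Fin N × Fin M → q,
      (∀ p : Fin N × Fin M, u p ≠ 0 → p.1 ∈ K i) ∧
      u + Pi.single (i, m) 1 ∈
        Submodule.span q ((fun k (p : Fin N × Fin M) => L p k) '' (R i : Set (Fin ℓ)))

open Finset

open Fin.NatCast Fin.CommRing in
lemma converse_key {N M ℓ : ℕ} [NeZero N] (hN : 3 ≤ N) {q : Type} [Field q]
    {L : Matrix (Fin N × Fin M) (Fin ℓ) q} {R : Fin N → Finset (Fin ℓ)}
    (hL : ValidVectorLinearCode q (fun i : Fin N => {i + 1}) L R) (j : Fin N) :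
    N * M ≤ ((Finset.univ.erase j).biUnion R).card + M := by
  classical
  set T : Finset (Fin ℓ) := (Finset.univ.erase j).biUnion R with hT
  have colFun : Fin ℓ → (Fin N × Fin M → q) := fun k p => L p k
  set gen : Finset (Fin N × Fin M → q) :=
    T.image (fun k (p : Fin N × Fin M) => L p k) ∪
      Finset.univ.image (fun m : Fin M => (Pi.single ((j, m) : Fin N × Fin M) (1:q) : Fin N × Fin M → q))
    with hgen
  set W : Submodule q (Fin N × Fin M → q) := Submodule.span q (gen : Set (Fin N × Fin M → q))
    with hW
  have hgenW : ∀ v ∈ gen, v ∈ W := fun v hv => Submodule.subset_span hv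
  -- Step A
  have stepA : ∀ s : ℕ, s < N → ∀ m : Fin M,
      (Pi.single ((j - (s : Fin N), m) : Fin N × Fin M) (1:q) : Fin N × Fin M → q) ∈ W := by
    intro s
    induction s with
    | zero =>
      intro _ m
      have hj0 : (j - ((0:ℕ) : Fin N)) = j := by simp
      rw [hj0]
      apply hgenW
      rw [hgen]
      apply Finset.mem_union_right
      exact Finset.mem_image.mpr ⟨m, Finset.mem_univ m, rfl⟩
    | succ s ih =>
      intro hs m
      have hsN : s < N := by omega
      set i : Fin N := j - ((s+1 : ℕ) : Fin N) with hi
      have hi1 : i + 1 = j - (s : Fin N) := by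
        rw [hi]
        push_cast
        ring
      have hij : i ≠ j := by
        rw [hi]
        intro h
        have h0 : ((s+1 : ℕ) : Fin N) = 0 := sub_eq_self.mp h
        rw [Fin.natCast_eq_zero] at h0
        have := Nat.le_of_dvd (by omega) h0
        omega
      obtain ⟨u, hsupp, hdec⟩ := hL i m
      have hRT : Submodule.span q ((fun k (p : Fin N × Fin M) => L p k) '' (R i : Set (Fin ℓ))) ≤ W := by
        apply Submodule.span_le.mpr
        intro v hv
        obtain ⟨k, hk, rfl⟩ := hv
        apply Submodule.subset_span
        rw [hgen]
        apply Finset.mem_coe.mpr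
        apply Finset.mem_union_left
        apply Finset.mem_image.mpr
        refine ⟨k, ?_, rfl⟩
        rw [hT]
        exact Finset.mem_biUnion.mpr ⟨i, Finset.mem_erase.mpr ⟨hij, Finset.mem_univ i⟩, hk⟩
      have hu : u ∈ W := by
        have hurw : u = ∑ m' : Fin M,
            u (i+1, m') • (Pi.single ((i+1, m') : Fin N × Fin M) (1:q) : Fin N × Fin M → q) := by
          funext p
          obtain ⟨j', m''⟩ := p
          by_cases hj' : j' = i + 1
          · subst hj'
            simp [Pi.single_apply, Prod.ext_iff]
          · have h0 : u (j', m'') = 0 := by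
              by_contra hne
              exact hj' (by simpa using hsupp (j', m'') hne)
            simp [h0, Pi.single_apply, Prod.ext_iff, Ne.symm, hj']
        rw [hurw]
        apply Submodule.sum_mem
        intro m' _
        apply Submodule.smul_mem
        rw [hi1]
        exact ih hsN m'
      have hmem : u + Pi.single ((i, m) : Fin N × Fin M) (1:q) ∈ W := hRT hdec
      have := Submodule.sub_mem W hmem hu
      simpa using this
  -- Step B : ⊤ ≤ W
  have stepB : ∀ x : Fin N × Fin M → q, x ∈ W := by
    intro x
    rw [pi_eq_sum_univ x]
    apply Submodule.sum_mem
    intro p _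
    apply Submodule.smul_mem
    have hsing : (fun j' => if p = j' then (1:q) else 0) =
        (Pi.single p (1:q) : Fin N × Fin M → q) := by
      funext j'
      rw [Pi.single_apply]
      simp [eq_comm]
    rw [hsing]
    obtain ⟨i, m⟩ := p
    have hrepr : i = j - (((j - i : Fin N) : ℕ) : Fin N) := by
      rw [Fin.cast_val_eq_self]
      ring
    rw [hrepr]
    exact stepA ((j - i : Fin N) : ℕ) (Fin.is_lt _) m
  have hWtop : W = ⊤ := eq_top_iff.mpr fun x _ => stepB x
  have h1 : (Module.finrank q (Fin N × Fin M → q)) = N * M := by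
    rw [Module.finrank_fintype_fun_eq_card]
    simp
  have h2 : Module.finrank q W ≤ gen.card := finrank_span_finset_le_card gen
  rw [hWtop, finrank_top, h1] at h2
  calc N * M ≤ gen.card := h2
    _ ≤ (T.image (fun k (p : Fin N × Fin M) => L p k)).card +
        (Finset.univ.image (fun m : Fin M => (Pi.single ((j, m) : Fin N × Fin M) (1:q) : Fin N × Fin M → q))).card :=
      Finset.card_union_le _ _
    _ ≤ T.card + M := by
        gcongr
        · exact Finset.card_image_le
        · exact le_trans Finset.card_image_le (by simp)

lemma count_bound {N ℓ : ℕ} (hN : 3 ≤ N) (R : Fin N → Finset (Fin ℓ)) :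
    ∑ j : Fin N, ((Finset.univ.erase j).biUnion R).card ≤
      (N - 2) * ℓ + ∑ i : Fin N, (R i).card := by
  classical
  have hcard : ∀ S : Finset (Fin ℓ), S.card = ∑ c : Fin ℓ, if c ∈ S then 1 else 0 := by
    intro S
    rw [Finset.sum_ite_mem, Finset.univ_inter, Finset.sum_const, smul_eq_mul, mul_one]
  -- per-column bound
  have percol : ∀ c : Fin ℓ,
      (Finset.univ.filter (fun j : Fin N => c ∈ (Finset.univ.erase j).biUnion R)).card ≤
      (N - 2) + (Finset.univ.filter (fun i : Fin N => c ∈ R i)).card := by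
    intro c
    set D := Finset.univ.filter (fun i : Fin N => c ∈ R i) with hD
    set F := Finset.univ.filter (fun j : Fin N => c ∈ (Finset.univ.erase j).biUnion R) with hF
    have hmemF : ∀ j, j ∈ F ↔ ∃ k, k ≠ j ∧ c ∈ R k := by
      intro j
      simp only [hF, Finset.mem_filter, Finset.mem_univ, true_and, Finset.mem_biUnion,
        Finset.mem_erase]
      constructor
      · rintro ⟨k, ⟨hk, _⟩, hck⟩; exact ⟨k, hk, hck⟩
      · rintro ⟨k, hk, hck⟩; exact ⟨k, ⟨hk, trivial⟩, hck⟩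
    rcases Nat.lt_or_ge D.card 2 with hD2 | hD2
    · rcases Nat.lt_or_ge D.card 1 with hD1 | hD1
      · -- D empty
        have hDe : D = ∅ := Finset.card_eq_zero.mp (by omega)
        have hFe : F = ∅ := by
          apply Finset.eq_empty_of_forall_notMem
          intro j hj
          obtain ⟨k, _, hck⟩ := (hmemF j).mp hj
          have : k ∈ D := by simp [hD, hck]
          simp [hDe] at this
        simp [hFe]
      · -- D = {i0}
        have hD1' : D.card = 1 := by omega
        obtain ⟨i0, hi0⟩ := Finset.card_eq_one.mp hD1'
        have hsub : F ⊆ Finset.univ.erase i0 := by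
          intro j hj
          obtain ⟨k, hkj, hck⟩ := (hmemF j).mp hj
          have hkD : k ∈ D := by simp [hD, hck]
          rw [hi0, Finset.mem_singleton] at hkD
          subst hkD
          exact Finset.mem_erase.mpr ⟨(Ne.symm hkj), Finset.mem_univ j⟩
        have := Finset.card_le_card hsub
        rw [Finset.card_erase_of_mem (Finset.mem_univ i0), Finset.card_univ,
          Fintype.card_fin] at this
        omega
    · have hFle : F.card ≤ N := by
        have := Finset.card_le_univ F
        simpa using this
      omega
  calc ∑ j : Fin N, ((Finset.univ.erase j).biUnion R).card
      = ∑ j : Fin N, ∑ c : Fin ℓ, if c ∈ (Finset.univ.erase j).biUnion R then 1 else 0 := by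
        simp_rw [← hcard]
    _ = ∑ c : Fin ℓ, ∑ j : Fin N, if c ∈ (Finset.univ.erase j).biUnion R then 1 else 0 :=
        Finset.sum_comm
    _ = ∑ c : Fin ℓ, (Finset.univ.filter (fun j : Fin N => c ∈ (Finset.univ.erase j).biUnion R)).card := by
        apply Finset.sum_congr rfl
        intro c _
        rw [Finset.card_filter]
    _ ≤ ∑ c : Fin ℓ, ((N - 2) + (Finset.univ.filter (fun i : Fin N => c ∈ R i)).card) :=
        Finset.sum_le_sum fun c _ => percol c
    _ = (N - 2) * ℓ + ∑ c : Fin ℓ, (Finset.univ.filter (fun i : Fin N => c ∈ R i)).card := by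
        rw [Finset.sum_add_distrib, Finset.sum_const, Finset.card_univ, Fintype.card_fin,
          smul_eq_mul, mul_comm]
    _ = (N - 2) * ℓ + ∑ i : Fin N, (R i).card := by
        congr 1
        calc ∑ c : Fin ℓ, (Finset.univ.filter (fun i : Fin N => c ∈ R i)).card
            = ∑ c : Fin ℓ, ∑ i : Fin N, if c ∈ R i then 1 else 0 := by
              apply Finset.sum_congr rfl
              intro c _
              rw [Finset.card_filter]
          _ = ∑ i : Fin N, ∑ c : Fin ℓ, if c ∈ R i then 1 else 0 := Finset.sum_comm
          _ = ∑ i : Fin N, (R i).card := by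
              apply Finset.sum_congr rfl
              intro i _
              rw [← hcard]

lemma converse_real {N M ℓ : ℕ} [NeZero N] (hN : 3 ≤ N) {q : Type} [Field q]
    {L : Matrix (Fin N × Fin M) (Fin ℓ) q} {R : Fin N → Finset (Fin ℓ)}
    (hM : 0 < M)
    (hL : ValidVectorLinearCode q (fun i : Fin N => {i + 1}) L R)
    {r : ℝ} (hloc : ∀ i, ((R i).card : ℝ) ≤ r * M) :
    max ((N : ℝ) * ((N : ℝ) - 1 - r) / ((N : ℝ) - 2)) ((N : ℝ) - 1) ≤ (ℓ : ℝ) / M := by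
  have hMR : (0:ℝ) < (M:ℝ) := by exact_mod_cast hM
  have hNR : (3:ℝ) ≤ (N:ℝ) := by exact_mod_cast hN
  -- bound 1 : N*M ≤ ℓ + M
  have hb1 : N * M ≤ ℓ + M := by
    have h := converse_key hN hL (0 : Fin N)
    have hTle : ((Finset.univ.erase (0 : Fin N)).biUnion R).card ≤ ℓ := by
      have := Finset.card_le_univ ((Finset.univ.erase (0 : Fin N)).biUnion R)
      simpa using this
    omega
  -- bound 2 : N*(N*M) ≤ (N-2)*ℓ + ∑ card + N*M
  have hb2 : N * (N * M) ≤ (N - 2) * ℓ + (∑ i : Fin N, (R i).card) + N * M := by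
    have hsum : ∑ j : Fin N, (N * M) ≤
        ∑ j : Fin N, (((Finset.univ.erase j).biUnion R).card + M) :=
      Finset.sum_le_sum fun j _ => converse_key hN hL j
    rw [Finset.sum_const, Finset.card_univ, Fintype.card_fin, smul_eq_mul] at hsum
    rw [Finset.sum_add_distrib, Finset.sum_const, Finset.card_univ, Fintype.card_fin,
      smul_eq_mul] at hsum
    have := count_bound hN R
    omega
  -- cast to ℝ
  apply max_le
  · -- N*(N-1-r)/(N-2) ≤ ℓ/M
    rw [div_le_div_iff₀ (by linarith) hMR]
    have hb2R : (N:ℝ) * ((N:ℝ) * M) ≤ ((N:ℝ) - 2) * ℓ + (∑ i : Fin N, ((R i).card : ℝ)) + (N:ℝ) * M := by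
      have := hb2
      have hcast : ((N - 2 : ℕ) : ℝ) = (N:ℝ) - 2 := by
        have h2 : (2:ℕ) ≤ N := by omega
        rw [Nat.cast_sub h2]
        norm_num
      have hb2R' : ((N * (N * M) : ℕ) : ℝ) ≤ (((N - 2) * ℓ + (∑ i : Fin N, (R i).card) + N * M : ℕ) : ℝ) := by
        exact_mod_cast hb2
      push_cast [hcast] at hb2R'
      linarith [hb2R']
    have hsumR : (∑ i : Fin N, ((R i).card : ℝ)) ≤ (N:ℝ) * (r * M) := by
      calc (∑ i : Fin N, ((R i).card : ℝ)) ≤ ∑ _i : Fin N, r * M :=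
            Finset.sum_le_sum fun i _ => hloc i
        _ = (N:ℝ) * (r * M) := by
            rw [Finset.sum_const, Finset.card_univ, Fintype.card_fin, nsmul_eq_mul]
    nlinarith [hb2R, hsumR]
  · -- N-1 ≤ ℓ/M
    rw [le_div_iff₀ hMR]
    have hb1R : (N:ℝ) * M ≤ (ℓ:ℝ) + M := by exact_mod_cast hb1
    nlinarith

namespace CycAux

/-- message sub-block index type -/
abbrev IM (n a b : ℕ) : Type := Fin a ⊕ (Fin b × Fin (n+3))

/-- number of columns for each sub-block -/
def cnt {n a b : ℕ} : IM n a b → ℕ := Sum.elim (fun _ => n+3) (fun _ => n+2)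

/-- column index type -/
abbrev IL (n a b : ℕ) : Type := Σ p : IM n a b, Fin (cnt p)

/-- the vertex associated to a column -/
def vtx {n a b : ℕ} : IL n a b → Fin (n+3)
  | ⟨.inl _, j⟩ => j
  | ⟨.inr (_, t), j⟩ => t.succAbove j

/-- the pivot (skipped vertex) of a column, if any -/
def piv {n a b : ℕ} : IL n a b → Option (Fin (n+3))
  | ⟨.inl _, _⟩ => none
  | ⟨.inr (_, t), _⟩ => some t

lemma card_IM (n a b : ℕ) : Fintype.card (IM n a b) = a + b * (n+3) := by
  simp [IM]

lemma card_IL (n a b : ℕ) : Fintype.card (IL n a b) = (n+3) * a + (n+3) * ((n+2) * b) := by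
  classical
  rw [Fintype.card_sigma]
  rw [Fintype.sum_sum_type]
  simp only [Fintype.card_fin]
  simp [cnt]
  ring

end CycAux

namespace CycAux

noncomputable def eM (n a b : ℕ) : IM n a b ≃ Fin (a + b * (n+3)) :=
  (Fintype.equivFin _).trans (finCongr (card_IM n a b))

noncomputable def eL (n a b : ℕ) : IL n a b ≃ Fin ((n+3) * a + (n+3) * ((n+2) * b)) :=
  (Fintype.equivFin _).trans (finCongr (card_IL n a b))

noncomputable def col (q : Type) [Field q] {n a b : ℕ} (z : IL n a b) :
    Fin (n+3) × Fin (a + b * (n+3)) → q :=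
  (Pi.single ((vtx z, eM n a b z.1)) (1:q) : _ → q) -
    (Pi.single ((vtx z + 1, eM n a b z.1)) (1:q) : _ → q)

noncomputable def Lmat (q : Type) [Field q] (n a b : ℕ) :
    Matrix (Fin (n+3) × Fin (a + b * (n+3))) (Fin ((n+3) * a + (n+3) * ((n+2) * b))) q :=
  fun p k => col q ((eL n a b).symm k) p

def Q {n a b : ℕ} (i : Fin (n+3)) : Finset (IL n a b) :=
  Finset.univ.sigma (fun p => Finset.univ.filter
    (fun j => vtx (⟨p, j⟩ : IL n a b) = i ∨ piv (⟨p, j⟩ : IL n a b) = some i))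

noncomputable def Rq (n a b : ℕ) (i : Fin (n+3)) :
    Finset (Fin ((n+3) * a + (n+3) * ((n+2) * b))) :=
  (Q i).image (eL n a b)

lemma card_Rq (n a b : ℕ) (i : Fin (n+3)) : (Rq n a b i).card = a + 2 * (b * (n+2)) := by
  classical
  rw [Rq, Finset.card_image_of_injective _ (eL n a b).injective]
  rw [Q, Finset.card_sigma]
  rw [Fintype.sum_sum_type]
  have h1 : ∀ s : Fin a,
      (Finset.univ.filter (fun j : Fin (cnt (Sum.inl s : IM n a b)) =>
        vtx (⟨Sum.inl s, j⟩ : IL n a b) = i ∨ piv (⟨Sum.inl s, j⟩ : IL n a b) = some i)).card = 1 := by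
    intro s
    have : (Finset.univ.filter (fun j : Fin (cnt (Sum.inl s : IM n a b)) =>
        vtx (⟨Sum.inl s, j⟩ : IL n a b) = i ∨ piv (⟨Sum.inl s, j⟩ : IL n a b) = some i)) = {i} := by
      ext j
      simp [vtx, piv]
      exact Finset.mem_singleton.symm
    rw [this]
    exact Finset.card_singleton _
  have h2 : ∀ x : Fin b × Fin (n+3),
      (Finset.univ.filter (fun j : Fin (cnt (Sum.inr x : IM n a b)) =>
        vtx (⟨Sum.inr x, j⟩ : IL n a b) = i ∨ piv (⟨Sum.inr x, j⟩ : IL n a b) = some i)).card =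
      if x.2 = i then n + 2 else 1 := by
    rintro ⟨s, t⟩
    by_cases ht : t = i
    · subst ht
      rw [if_pos rfl]
      have : (Finset.univ.filter (fun j : Fin (cnt (Sum.inr (s, t) : IM n a b)) =>
          vtx (⟨Sum.inr (s, t), j⟩ : IL n a b) = t ∨ piv (⟨Sum.inr (s, t), j⟩ : IL n a b) = some t)) =
          Finset.univ := by
        ext j
        simp [vtx, piv]
      rw [this]
      exact Finset.card_fin (n+2)
    · obtain ⟨j0, hj0⟩ := Fin.exists_succAbove_eq (show i ≠ t from fun h => ht h.symm)
      have : (Finset.univ.filter (fun j : Fin (cnt (Sum.inr (s, t) : IM n a b)) =>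
          vtx (⟨Sum.inr (s, t), j⟩ : IL n a b) = i ∨ piv (⟨Sum.inr (s, t), j⟩ : IL n a b) = some i)) =
          {j0} := by
        ext j
        refine (Finset.mem_filter.trans (and_iff_right (Finset.mem_univ _))).trans
          (Iff.trans ?_ Finset.mem_singleton.symm)
        simp only [vtx, piv]
        constructor
        · rintro (h | h)
          · exact Fin.succAbove_right_injective (p := t) (show t.succAbove j = t.succAbove j0 by rw [hj0]; exact h)
          · simp at h; exact absurd h ht
        · rintro rfl
          exact Or.inl hj0
      rw [this]
      refine (Finset.card_singleton _).trans ?_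
      simp [ht]
  simp only [h1, h2]
  rw [Finset.sum_const, Finset.card_univ, Fintype.card_fin, smul_eq_mul, mul_one]
  rw [Fintype.sum_prod_type]
  have h3 : (∑ t : Fin (n+3), if t = i then n + 2 else 1) = 2 * (n+2) := by
    have : ∀ t : Fin (n+3), (if t = i then n + 2 else 1) = 1 + (if t = i then n + 1 else 0) := by
      intro t; by_cases h : t = i <;> simp [h] <;> omega
    simp only [this]
    rw [Finset.sum_add_distrib,
      Finset.sum_const, Finset.card_univ, Fintype.card_fin, smul_eq_mul, mul_one,
      Finset.sum_ite_eq' Finset.univ i (fun _ => n+1)]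
    simp
    ring
  simp only [h3]
  rw [Finset.sum_const, Finset.card_univ, Fintype.card_fin, smul_eq_mul]
  ring

end CycAux

namespace CycAux

lemma valid_code (q : Type) [Field q] (n a b : ℕ) :
    ValidVectorLinearCode q (fun i : Fin (n+3) => {i + 1}) (Lmat q n a b) (Rq n a b) := by
  classical
  intro i m
  refine ⟨-(Pi.single ((i + 1, m) : Fin (n+3) × Fin (a + b * (n+3))) (1:q) : _ → q), ?_, ?_⟩
  · intro p' hne
    have h1 : (Pi.single ((i + 1, m) : Fin (n+3) × Fin (a + b * (n+3))) (1:q) : _ → q) p' ≠ 0 := by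
      simpa using hne
    rw [Pi.single_apply] at h1
    by_cases h : p' = (i + 1, m)
    · rw [h]; exact Finset.mem_singleton_self _
    · simp [h] at h1
  · -- decoding
    set S := ((fun k (p : Fin (n+3) × Fin (a + b * (n+3))) => Lmat q n a b p k) ''
      ((Rq n a b i : Finset (Fin ((n+3) * a + (n+3) * ((n+2) * b)))) : Set _)) with hS
    have hcol_span : ∀ z ∈ (Q i : Finset (IL n a b)), col q z ∈ Submodule.span q S := by
      intro z hz
      apply Submodule.subset_span
      rw [hS]
      refine ⟨eL n a b z, ?_, ?_⟩
      · exact Finset.mem_coe.mpr (Finset.mem_image_of_mem _ hz)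
      · funext p'
        show Lmat q n a b p' (eL n a b z) = col q z p'
        rw [Lmat, Equiv.symm_apply_apply]
    have htarget : -(Pi.single ((i + 1, m) : Fin (n+3) × Fin (a + b * (n+3))) (1:q) : _ → q) +
        Pi.single ((i, m) : Fin (n+3) × Fin (a + b * (n+3))) (1:q) =
        (Pi.single ((i, m) : Fin (n+3) × Fin (a + b * (n+3))) (1:q) : _ → q) -
        (Pi.single ((i + 1, m) : Fin (n+3) × Fin (a + b * (n+3))) (1:q) : _ → q) := by
      abel
    rw [htarget]
    rcases hp : (eM n a b).symm m with s | st
    · -- code-1 column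
      have hm : m = eM n a b (Sum.inl s) := ((Equiv.symm_apply_eq _).mp hp)
      have hcol : col q (⟨Sum.inl s, i⟩ : IL n a b) =
          (Pi.single ((i, m) : Fin (n+3) × Fin (a + b * (n+3))) (1:q) : _ → q) -
          (Pi.single ((i + 1, m) : Fin (n+3) × Fin (a + b * (n+3))) (1:q) : _ → q) := by
        rw [col, hm]
        rfl
      rw [← hcol]
      apply hcol_span
      rw [Q]
      refine Finset.mem_sigma.mpr ⟨Finset.mem_univ _, ?_⟩
      refine Finset.mem_filter.mpr ⟨Finset.mem_univ _, Or.inl ?_⟩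
      rfl
    · obtain ⟨s, t⟩ := st
      have hm : m = eM n a b (Sum.inr (s, t)) := ((Equiv.symm_apply_eq _).mp hp)
      by_cases ht : t = i
      · -- pivot case: use the sum of all columns of the copy
        subst ht
        have hsum : (∑ j : Fin (n+2), col q (⟨Sum.inr (s, t), j⟩ : IL n a b)) =
            (Pi.single ((t + 1, m) : Fin (n+3) × Fin (a + b * (n+3))) (1:q) : _ → q) -
            (Pi.single ((t, m) : Fin (n+3) × Fin (a + b * (n+3))) (1:q) : _ → q) := by
          have hcols : ∀ j : Fin (n+2), col q (⟨Sum.inr (s, t), j⟩ : IL n a b) =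
              (Pi.single ((t.succAbove j, m) : Fin (n+3) × Fin (a + b * (n+3))) (1:q) : _ → q) -
              (Pi.single ((t.succAbove j + 1, m) : Fin (n+3) × Fin (a + b * (n+3))) (1:q) : _ → q) := by
            intro j
            rw [col, hm]
            rfl
          simp only [hcols]
          rw [Finset.sum_sub_distrib]
          have A := Fin.sum_univ_succAbove
            (fun v : Fin (n+3) => (Pi.single ((v, m) : Fin (n+3) × Fin (a + b * (n+3))) (1:q) : _ → q)) t
          have B := Fin.sum_univ_succAbove
            (fun v : Fin (n+3) => (Pi.single ((v + 1, m) : Fin (n+3) × Fin (a + b * (n+3))) (1:q) : _ → q)) t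
          have C : (∑ v : Fin (n+3), (Pi.single ((v + 1, m) : Fin (n+3) × Fin (a + b * (n+3))) (1:q) : _ → q)) =
              ∑ v : Fin (n+3), (Pi.single ((v, m) : Fin (n+3) × Fin (a + b * (n+3))) (1:q) : _ → q) := by
            exact Fintype.sum_equiv (Equiv.addRight 1) _ _ (fun v => rfl)
          rw [C] at B
          -- A : ∑ v, g v = g t + ∑ j, g (succAbove j)
          -- B : ∑ v, g v = g' t + ∑ j, g' (succAbove j)
          have hA : (∑ j : Fin (n+2), (Pi.single ((t.succAbove j, m) : Fin (n+3) × Fin (a + b * (n+3))) (1:q) : _ → q)) =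
              (∑ v : Fin (n+3), (Pi.single ((v, m) : Fin (n+3) × Fin (a + b * (n+3))) (1:q) : _ → q)) -
              (Pi.single ((t, m) : Fin (n+3) × Fin (a + b * (n+3))) (1:q) : _ → q) := by
            rw [A]; abel
          have hB : (∑ j : Fin (n+2), (Pi.single ((t.succAbove j + 1, m) : Fin (n+3) × Fin (a + b * (n+3))) (1:q) : _ → q)) =
              (∑ v : Fin (n+3), (Pi.single ((v, m) : Fin (n+3) × Fin (a + b * (n+3))) (1:q) : _ → q)) -
              (Pi.single ((t + 1, m) : Fin (n+3) × Fin (a + b * (n+3))) (1:q) : _ → q) := by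
            rw [B]; abel
          rw [hA, hB]
          abel
        have : (Pi.single ((t, m) : Fin (n+3) × Fin (a + b * (n+3))) (1:q) : _ → q) -
            (Pi.single ((t + 1, m) : Fin (n+3) × Fin (a + b * (n+3))) (1:q) : _ → q) =
            -(∑ j : Fin (n+2), col q (⟨Sum.inr (s, t), j⟩ : IL n a b)) := by
          rw [hsum]; abel
        rw [this]
        apply Submodule.neg_mem
        apply Submodule.sum_mem
        intro j _
        apply hcol_span
        rw [Q]
        refine Finset.mem_sigma.mpr ⟨Finset.mem_univ _, ?_⟩
        refine Finset.mem_filter.mpr ⟨Finset.mem_univ _, Or.inr rfl⟩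
      · -- non-pivot: single column
        obtain ⟨j0, hj0⟩ := Fin.exists_succAbove_eq (show i ≠ t from fun h => ht h.symm)
        have hcol : col q (⟨Sum.inr (s, t), j0⟩ : IL n a b) =
            (Pi.single ((i, m) : Fin (n+3) × Fin (a + b * (n+3))) (1:q) : _ → q) -
            (Pi.single ((i + 1, m) : Fin (n+3) × Fin (a + b * (n+3))) (1:q) : _ → q) := by
          rw [col, hm]
          show (Pi.single ((t.succAbove j0, _) : Fin (n+3) × Fin (a + b * (n+3))) (1:q) : _ → q) -
            (Pi.single ((t.succAbove j0 + 1, _) : Fin (n+3) × Fin (a + b * (n+3))) (1:q) : _ → q) = _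
          rw [hj0]
        rw [← hcol]
        apply hcol_span
        rw [Q]
        refine Finset.mem_sigma.mpr ⟨Finset.mem_univ _, ?_⟩
        refine Finset.mem_filter.mpr ⟨Finset.mem_univ _, Or.inl ?_⟩
        show t.succAbove j0 = i
        exact hj0

end CycAux

lemma approx_point (n : ℕ) {r ε : ℝ} (hr1 : 1 < r) (hlt : r * ((n:ℝ)+3) < 2*((n:ℝ)+2))
    (hε : 0 < ε) :
    ∃ a b : ℕ, 0 < a + b * (n+3) ∧
      ((a + 2*(b*(n+2)) : ℕ) : ℝ) ≤ r * ((a + b*(n+3) : ℕ) : ℝ) ∧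
      (((n+3)*a + (n+3)*((n+2)*b) : ℕ) : ℝ) / ((a + b*(n+3) : ℕ) : ℝ) <
        ((n:ℝ)+3) * (((n:ℝ)+3) - 1 - r) / (((n:ℝ)+3) - 2) + ε := by
  have hx0 : (0:ℝ) ≤ (n:ℝ) := Nat.cast_nonneg n
  have hrpos : 0 < r - 1 := by linarith
  have hc0 : 0 < 2*((n:ℝ)+2) - r*((n:ℝ)+3) := by linarith
  set t : ℝ := (2*((n:ℝ)+2) - r*((n:ℝ)+3)) / (r - 1) with ht
  have ht0 : 0 ≤ t := le_of_lt (div_pos hc0 hrpos)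
  have htc : (r - 1) * t = 2*((n:ℝ)+2) - r*((n:ℝ)+3) := by
    rw [ht]; field_simp
  -- choose b
  obtain ⟨b, hb1, hbε⟩ : ∃ b : ℕ, (1:ℝ) ≤ (b:ℝ) ∧ 1 < ε * b := by
    refine ⟨⌈1/ε⌉₊ + 1, ?_, ?_⟩
    · push_cast
      have : (0:ℝ) ≤ (⌈1/ε⌉₊ : ℝ) := Nat.cast_nonneg _
      linarith
    · have h1 : (1/ε : ℝ) < ((⌈1/ε⌉₊ + 1 : ℕ) : ℝ) := by
        push_cast
        have := Nat.le_ceil (1/ε : ℝ)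
        linarith
      calc (1:ℝ) = ε * (1/ε) := by field_simp
        _ < ε * ((⌈1/ε⌉₊ + 1 : ℕ) : ℝ) := mul_lt_mul_of_pos_left h1 hε
  have hb0 : 0 < b := by exact_mod_cast lt_of_lt_of_le zero_lt_one hb1
  -- choose a
  obtain ⟨a, hta, ha1⟩ : ∃ a : ℕ, (b:ℝ) * t ≤ (a:ℝ) ∧ (a:ℝ) ≤ (b:ℝ) * t + 1 :=
    ⟨⌈(b:ℝ) * t⌉₊, Nat.le_ceil _, le_of_lt (Nat.ceil_lt_add_one (by positivity))⟩
  have ha0 : (0:ℝ) ≤ (a:ℝ) := Nat.cast_nonneg a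
  have h6 : (b:ℝ) * (2*((n:ℝ)+2) - r*((n:ℝ)+3)) ≤ (r-1) * a := by
    calc (b:ℝ) * (2*((n:ℝ)+2) - r*((n:ℝ)+3)) = (r-1) * ((b:ℝ)*t) := by rw [← htc]; ring
      _ ≤ (r-1) * a := mul_le_mul_of_nonneg_left hta (le_of_lt hrpos)
  have h7 : (r-1) * a ≤ (b:ℝ) * (2*((n:ℝ)+2) - r*((n:ℝ)+3)) + (r-1) := by
    calc (r-1) * a ≤ (r-1) * ((b:ℝ)*t + 1) := mul_le_mul_of_nonneg_left ha1 (le_of_lt hrpos)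
      _ = (b:ℝ) * ((r-1)*t) + (r-1) := by ring
      _ = (b:ℝ) * (2*((n:ℝ)+2) - r*((n:ℝ)+3)) + (r-1) := by rw [htc]
  have hr2 : r < (n:ℝ) + 2 := by nlinarith
  refine ⟨a, b, ?_, ?_, ?_⟩
  · have : 0 < b * (n+3) := by positivity
    omega
  · push_cast
    nlinarith [h6]
  · push_cast
    have hM0 : (0:ℝ) < (a:ℝ) + (b:ℝ)*((n:ℝ)+3) := by nlinarith
    have hden : (0:ℝ) < (n:ℝ) + 3 - 2 := by linarith
    have hx13 : (0:ℝ) < ((n:ℝ)+1) * ((n:ℝ)+3) := by nlinarith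
    have hgoal : (((n:ℝ)+3)*(a:ℝ) + ((n:ℝ)+3)*(((n:ℝ)+2)*(b:ℝ))) * ((n:ℝ) + 3 - 2) <
        ((((n:ℝ)+3)*(((n:ℝ)+3) - 1 - r) + ε*((n:ℝ)+3-2))) * ((a:ℝ) + (b:ℝ)*((n:ℝ)+3)) := by
      nlinarith [h7, hbε, hb1, hε, hr2, hrpos, ha0, hx0,
        mul_nonneg (mul_nonneg hε.le (by linarith : (0:ℝ) ≤ (n:ℝ)+1)) ha0,
        mul_lt_mul_of_pos_left hbε hx13,
        mul_le_mul_of_nonneg_left h7 (by linarith : (0:ℝ) ≤ (n:ℝ)+3),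
        mul_le_mul_of_nonneg_right hr2.le (by linarith : (0:ℝ) ≤ (n:ℝ)+3)]
    calc (((n:ℝ)+3)*(a:ℝ) + ((n:ℝ)+3)*(((n:ℝ)+2)*(b:ℝ))) / ((a:ℝ) + (b:ℝ)*((n:ℝ)+3))
        < ((((n:ℝ)+3)*(((n:ℝ)+3) - 1 - r) + ε*((n:ℝ)+3-2))) / ((n:ℝ)+3-2) := by
          rw [div_lt_div_iff₀ hM0 hden]
          exact hgoal
      _ = ((n:ℝ)+3) * (((n:ℝ)+3) - 1 - r) / (((n:ℝ)+3) - 2) + ε := by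
          field_simp

/-- For the directed `N`-cycle (side information `K i = {i+1}` in `Fin N`)
with `N ≥ 3`, the optimal locality–rate trade-off among vector linear index codes over `F_q`
is `β*_{G,q}(r) = max { N(N−1−r)/(N−2), N−1 }` for all `r ≥ 1`. -/
theorem directed_cycle_vector_linear_tradeoff
    {N : ℕ} [NeZero N] (hN : 3 ≤ N) (q : Type) [Field q] [Fintype q]
    (r : ℝ) (hr : 1 ≤ r) :
    sInf {β : ℝ | ∃ (M ℓ : ℕ) (L : Matrix (Fin N × Fin M) (Fin ℓ) q)
        (R : Fin N → Finset (Fin ℓ)),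
        0 < M ∧ ValidVectorLinearCode q (fun i : Fin N => {i + 1}) L R ∧
        (∀ i, ((R i).card : ℝ) ≤ r * M) ∧ β = (ℓ : ℝ) / M}
      = max ((N : ℝ) * ((N : ℝ) - 1 - r) / ((N : ℝ) - 2)) ((N : ℝ) - 1) := by
  obtain ⟨n, rfl⟩ : ∃ n, N = n + 3 := ⟨N - 3, by omega⟩
  set S : Set ℝ := {β : ℝ | ∃ (M ℓ : ℕ) (L : Matrix (Fin (n+3) × Fin M) (Fin ℓ) q)
      (R : Fin (n+3) → Finset (Fin ℓ)),
      0 < M ∧ ValidVectorLinearCode q (fun i : Fin (n+3) => {i + 1}) L R ∧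
      (∀ i, ((R i).card : ℝ) ≤ r * M) ∧ β = (ℓ : ℝ) / M} with hS
  have hmem : ∀ a b : ℕ, 0 < a + b * (n+3) →
      ((a + 2*(b*(n+2)) : ℕ) : ℝ) ≤ r * ((a + b*(n+3) : ℕ) : ℝ) →
      ((((n+3)*a + (n+3)*((n+2)*b) : ℕ) : ℝ) / ((a + b*(n+3) : ℕ) : ℝ)) ∈ S := by
    intro a b h1 h2
    exact ⟨a + b*(n+3), (n+3)*a + (n+3)*((n+2)*b), CycAux.Lmat q n a b, CycAux.Rq n a b,
      h1, CycAux.valid_code q n a b,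
      (fun i => by rw [CycAux.card_Rq]; exact h2), rfl⟩
  have hlb : ∀ β ∈ S, max (((n+3 : ℕ) : ℝ) * (((n+3 : ℕ) : ℝ) - 1 - r) / (((n+3 : ℕ) : ℝ) - 2))
      (((n+3 : ℕ) : ℝ) - 1) ≤ β := by
    rintro β ⟨M, ℓ, L, R, hM, hvalid, hloc, rfl⟩
    exact converse_real (by omega) hM hvalid hloc
  have hne : S.Nonempty := by
    refine ⟨_, hmem 1 0 (by omega) ?_⟩
    push_cast
    linarith
  have hbdd : BddBelow S := ⟨_, hlb⟩
  apply le_antisymm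
  · -- upper bound on sInf
    have hcast : ((n+3 : ℕ) : ℝ) = (n:ℝ) + 3 := by push_cast; ring
    rcases le_or_gt (2*((n:ℝ)+2)) (r * ((n:ℝ)+3)) with hcase | hcase
    · -- high locality: code (0,1) achieves N-1
      have hloc : ((0 + 2*(1*(n+2)) : ℕ) : ℝ) ≤ r * ((0 + 1*(n+3) : ℕ) : ℝ) := by
        push_cast
        linarith
      have h := csInf_le hbdd (hmem 0 1 (by omega) hloc)
      have hval : ((((n+3)*0 + (n+3)*((n+2)*1) : ℕ) : ℝ) / ((0 + 1*(n+3) : ℕ) : ℝ)) =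
          ((n+3 : ℕ) : ℝ) - 1 := by
        push_cast
        rw [div_eq_iff (by positivity : ((0:ℝ)+1*((n:ℝ)+3)) ≠ 0)]
        ring
      rw [hval] at h
      exact le_trans h (le_max_right _ _)
    · rcases eq_or_lt_of_le hr with heq | hr1
      · -- r = 1 : code (1,0) achieves N
        have hloc : ((1 + 2*(0*(n+2)) : ℕ) : ℝ) ≤ r * ((1 + 0*(n+3) : ℕ) : ℝ) := by
          push_cast
          linarith
        have h := csInf_le hbdd (hmem 1 0 (by omega) hloc)
        have hval : ((((n+3)*1 + (n+3)*((n+2)*0) : ℕ) : ℝ) / ((1 + 0*(n+3) : ℕ) : ℝ)) =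
            ((n:ℝ) + 3) := by
          push_cast
          norm_num
        rw [hval] at h
        refine le_trans h (le_trans (le_of_eq ?_) (le_max_left _ _))
        have hd : (0:ℝ) < (n:ℝ)+3-2 := by
          have : (0:ℝ) ≤ (n:ℝ) := Nat.cast_nonneg n
          linarith
        rw [hcast, ← heq]
        rw [eq_div_iff hd.ne']
        ring
      · -- intermediate: approximation
        apply le_of_forall_pos_le_add
        intro ε hε
        obtain ⟨a, b, h1, h2, h3⟩ := approx_point n hr1 hcase hε
        have h := csInf_le hbdd (hmem a b h1 h2)
        have hB1 : ((n:ℝ)+3) * (((n:ℝ)+3) - 1 - r) / (((n:ℝ)+3) - 2) ≤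
            max (((n+3 : ℕ) : ℝ) * (((n+3 : ℕ) : ℝ) - 1 - r) / (((n+3 : ℕ) : ℝ) - 2))
              (((n+3 : ℕ) : ℝ) - 1) := by
          rw [hcast]
          exact le_max_left _ _
        linarith
  · exact le_csInf hne hlb
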